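/- Let (a_n) satisfy ∑|a_n|/√n < ∞ and the C-isometry condition. Then ST(conj(a_n))S = T(a_n)* on L²(0,∞), where Sf(x) = (1/x)f(1/x). -/

import Mathlib

open MeasureTheory Set ComplexConjugate

noncomputable def ν : Measure ℝ := volume.restrict (Set.Ioi (0:ℝ))

/-- `T(a)f(x) = ∑_{n≥1} a_n f(n x)`. -/
noncomputable def Tfun (a : ℕ → ℂ) (f : ℝ → ℂ) : ℝ → ℂ :=
  fun x => ∑' n : ℕ, a (n + 1) * f ((n + 1) * x)

/-- `Sf(x) = (1/x) f(1/x)`. -/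
noncomputable def Sfun (f : ℝ → ℂ) : ℝ → ℂ := fun x => (x : ℂ)⁻¹ * f x⁻¹

namespace Stmt10Aux

open scoped ENNReal NNReal

lemma lintegral_image_1d {s : Set ℝ} {f f' : ℝ → ℝ} (hs : MeasurableSet s)
    (hf' : ∀ x ∈ s, HasDerivWithinAt f (f' x) s x) (hf : InjOn f s) (g : ℝ → ℝ≥0∞) :
    ∫⁻ x in f '' s, g x = ∫⁻ x in s, ENNReal.ofReal |f' x| * g (f x) := by
  simpa only [ContinuousLinearMap.det_toSpanSingleton] using
    lintegral_image_eq_lintegral_abs_det_fderiv_mul volume hs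
      (fun x hx => (hf' x hx).hasFDerivWithinAt) hf g

lemma image_inv_Ioi : (fun x : ℝ => x⁻¹) '' Ioi 0 = Ioi 0 := by
  ext y
  constructor
  · rintro ⟨x, hx, rfl⟩; exact mem_Ioi.mpr (inv_pos.mpr (mem_Ioi.mp hx))
  · intro hy; exact ⟨y⁻¹, mem_Ioi.mpr (inv_pos.mpr (mem_Ioi.mp hy)), inv_inv y⟩

lemma image_mul_left_Ioi {c : ℝ} (hc : 0 < c) : (fun x : ℝ => c * x) '' Ioi 0 = Ioi 0 := by
  ext y
  constructor
  · rintro ⟨x, hx, rfl⟩; exact mul_pos hc hx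
  · intro hy; exact ⟨c⁻¹ * y, mul_pos (inv_pos.mpr hc) hy, by field_simp⟩

lemma hasDeriv_inv_Ioi : ∀ x ∈ Ioi (0:ℝ),
    HasDerivWithinAt (fun y : ℝ => y⁻¹) (-(x^2)⁻¹) (Ioi 0) x := by
  intro x hx
  exact (hasDerivAt_inv (ne_of_gt hx)).hasDerivWithinAt

lemma lintegral_inv_Ioi (g : ℝ → ℝ≥0∞) :
    ∫⁻ x in Ioi (0:ℝ), g x = ∫⁻ x in Ioi (0:ℝ), ENNReal.ofReal ((x^2)⁻¹) * g x⁻¹ := by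
  have h := lintegral_image_1d (f := fun y : ℝ => y⁻¹) (f' := fun x => -(x^2)⁻¹)
    measurableSet_Ioi hasDeriv_inv_Ioi (inv_injective.injOn) g
  rw [image_inv_Ioi] at h
  rw [h]
  refine setLIntegral_congr_fun measurableSet_Ioi ?_
  intro x hx
  beta_reduce
  rw [abs_neg, abs_of_nonneg (by positivity)]

lemma hasDeriv_mul (c x : ℝ) : HasDerivAt (fun y : ℝ => c * y) c x := by
  simpa using (hasDerivAt_id x).const_mul c

lemma lintegral_mul_left_Ioi {c : ℝ} (hc : 0 < c) (g : ℝ → ℝ≥0∞) :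
    ∫⁻ x in Ioi (0:ℝ), g (c * x) = ENNReal.ofReal c⁻¹ * ∫⁻ x in Ioi (0:ℝ), g x := by
  have h := lintegral_image_1d (s := Ioi (0:ℝ)) (f := fun y : ℝ => c * y) (f' := fun _ => c)
    measurableSet_Ioi (fun x _ => (hasDeriv_mul c x).hasDerivWithinAt)
    ((mul_right_injective₀ hc.ne').injOn) g
  rw [image_mul_left_Ioi hc] at h
  rw [h]
  rw [lintegral_const_mul' _ _ (by simp : ENNReal.ofReal |c| ≠ ⊤), ← mul_assoc,
    ← ENNReal.ofReal_mul (by positivity), abs_of_pos hc]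
  rw [inv_mul_cancel₀ hc.ne', ENNReal.ofReal_one, one_mul]

lemma nu_apply {s : Set ℝ} (hs : MeasurableSet s) : ν s = volume (s ∩ Ioi 0) := by
  simp [ν, Measure.restrict_apply hs]

lemma qmp_mul {c : ℝ} (hc : 0 < c) :
    Measure.QuasiMeasurePreserving (fun x : ℝ => c * x) ν ν := by
  refine ⟨(measurable_const_mul c), Measure.AbsolutelyContinuous.mk ?_⟩
  intro s hs h0
  rw [Measure.map_apply (measurable_const_mul c) hs]
  rw [nu_apply hs] at h0
  rw [nu_apply ((measurable_const_mul c) hs)]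
  have hsub : (fun x : ℝ => c * x) ⁻¹' s ∩ Ioi 0 ⊆ (fun x : ℝ => c * x) ⁻¹' (s ∩ Ioi 0) := by
    rintro x ⟨hx1, hx2⟩
    exact ⟨hx1, mul_pos hc hx2⟩
  refine measure_mono_null hsub ?_
  rw [Real.volume_preimage_mul_left hc.ne', h0, mul_zero]

lemma qmp_inv : Measure.QuasiMeasurePreserving (fun x : ℝ => x⁻¹) ν ν := by
  refine ⟨measurable_inv, Measure.AbsolutelyContinuous.mk ?_⟩
  intro s hs h0
  rw [Measure.map_apply measurable_inv hs, nu_apply (measurable_inv hs)]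
  rw [nu_apply hs] at h0
  set s' := s ∩ Ioi 0 with hs'def
  have hs' : MeasurableSet s' := hs.inter measurableSet_Ioi
  have key : ∫⁻ x in Ioi (0:ℝ), ENNReal.ofReal ((x^2)⁻¹) * s'.indicator 1 x⁻¹ = 0 := by
    rw [← lintegral_inv_Ioi (s'.indicator 1)]
    rw [lintegral_indicator hs']
    simp only [Pi.one_apply, setLIntegral_one, Measure.restrict_apply hs']
    rw [inter_comm, ← inter_assoc]
    simpa [inter_comm, inter_assoc, inter_self] using
      measure_mono_null (inter_subset_left) h0
  have hmeas : Measurable fun x : ℝ => ENNReal.ofReal ((x^2)⁻¹) * s'.indicator 1 x⁻¹ := by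
    refine Measurable.mul ?_ ?_
    · exact (measurable_id.pow_const 2).inv.ennreal_ofReal
    · exact (measurable_indicator_const_iff (1:ℝ≥0∞) |>.mpr hs').comp measurable_inv
  have hae := (lintegral_eq_zero_iff hmeas).mp key
  have h1 : ∀ᵐ x ∂(volume.restrict (Ioi (0:ℝ))), x ∈ Ioi (0:ℝ) :=
    ae_restrict_mem measurableSet_Ioi
  have h2 : ∀ᵐ x ∂(volume.restrict (Ioi (0:ℝ))), x ∉ (fun x : ℝ => x⁻¹) ⁻¹' s := by
    filter_upwards [hae, h1] with x hx hx0
    intro hmem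
    have hx0' : (0:ℝ) < x := hx0
    have hne : ENNReal.ofReal ((x^2)⁻¹) ≠ 0 := by
      simp only [ne_eq, ENNReal.ofReal_eq_zero, not_le]
      positivity
    have hind : s'.indicator (1 : ℝ → ℝ≥0∞) x⁻¹ = 0 := by
      have := mul_eq_zero.mp hx
      tauto
    have hmem' : x⁻¹ ∈ s' := ⟨hmem, inv_pos.mpr hx0'⟩
    rw [indicator_of_mem hmem'] at hind
    simp at hind
  have h3 := (ae_iff.mp h2)
  simp only [not_not] at h3
  rw [show {a : ℝ | a ∈ (fun x : ℝ => x⁻¹) ⁻¹' s} = Inv.inv ⁻¹' s from rfl,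
    Measure.restrict_apply (measurable_inv hs)] at h3
  exact h3

lemma image_cinv {c : ℝ} (hc : 0 < c) : (fun y : ℝ => (c * y)⁻¹) '' Ioi 0 = Ioi 0 := by
  ext z
  constructor
  · rintro ⟨y, hy, rfl⟩
    exact inv_pos.mpr (mul_pos hc hy)
  · intro hz
    refine ⟨(c * z)⁻¹, inv_pos.mpr (mul_pos hc hz), ?_⟩
    field_simp

lemma key_sub {c : ℝ} (hc : 0 < c) (A : ℂ) (f g : ℝ → ℂ) :
    ∫ x in Ioi (0:ℝ), A * conj (f (c * x)) * ((x:ℂ)⁻¹ * g x⁻¹)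
      = ∫ x in Ioi (0:ℝ), conj ((x:ℂ)⁻¹ * f x⁻¹) * (A * g (c * x)) := by
  have hderiv : ∀ y ∈ Ioi (0:ℝ), HasDerivWithinAt (fun y : ℝ => (c * y)⁻¹)
      (-c / (c * y)^2) (Ioi 0) y := fun y hy =>
    ((hasDeriv_mul c y).inv (mul_pos hc (mem_Ioi.mp hy)).ne').hasDerivWithinAt
  have hinj : InjOn (fun y : ℝ => (c * y)⁻¹) (Ioi 0) :=
    (inv_injective.comp (mul_right_injective₀ hc.ne')).injOn
  have h := integral_image_eq_integral_abs_deriv_smul measurableSet_Ioi hderiv hinj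
    (fun x => A * conj (f (c * x)) * ((x:ℂ)⁻¹ * g x⁻¹))
  rw [image_cinv hc] at h
  rw [h]
  refine setIntegral_congr_fun measurableSet_Ioi ?_
  intro y hy
  have hy0 : (0:ℝ) < y := hy
  have hcy : (0:ℝ) < c * y := mul_pos hc hy0
  have habs : |-c / (c * y)^2| = c / (c * y)^2 := by
    rw [abs_div, abs_neg, abs_of_pos hc, abs_of_pos (by positivity)]
  have harg1 : c * (c * y)⁻¹ = y⁻¹ := by field_simp
  have harg2 : ((c * y)⁻¹)⁻¹ = c * y := inv_inv _
  simp only [habs, harg1, harg2, Complex.real_smul]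
  rw [map_mul, map_inv₀, Complex.conj_ofReal]
  push_cast
  have hyC : (y:ℂ) ≠ 0 := by exact_mod_cast hy0.ne'
  have hcC : (c:ℂ) ≠ 0 := by exact_mod_cast hc.ne'
  field_simp

lemma holder_bound {c : ℝ} (hc : 0 < c) (φ ψ : ℝ → ℂ)
    (hφ : AEStronglyMeasurable φ ν) (hψ : AEStronglyMeasurable ψ ν) :
    ∫⁻ x, (‖φ (c * x)‖₊ : ℝ≥0∞) * ‖ψ x‖₊ ∂ν ≤
      ENNReal.ofReal c⁻¹ ^ (1/2:ℝ) *
        ((∫⁻ x, (‖φ x‖₊:ℝ≥0∞) ^ (2:ℝ) ∂ν) ^ (1/2:ℝ) *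
          (∫⁻ x, (‖ψ x‖₊:ℝ≥0∞) ^ (2:ℝ) ∂ν) ^ (1/2:ℝ)) := by
  have hconj : (2:ℝ).HolderConjugate 2 := ⟨by norm_num, by norm_num, by norm_num⟩
  have hφm : AEMeasurable (fun x => (‖φ (c * x)‖₊ : ℝ≥0∞)) ν :=
    hφ.enorm.comp_quasiMeasurePreserving (qmp_mul hc)
  have hψm : AEMeasurable (fun x => (‖ψ x‖₊ : ℝ≥0∞)) ν := hψ.enorm
  have H := ENNReal.lintegral_mul_le_Lp_mul_Lq ν hconj hφm hψm
  have hscale : ∫⁻ x, (‖φ (c * x)‖₊:ℝ≥0∞) ^ (2:ℝ) ∂ν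
      = ENNReal.ofReal c⁻¹ * ∫⁻ x, (‖φ x‖₊:ℝ≥0∞) ^ (2:ℝ) ∂ν :=
    lintegral_mul_left_Ioi hc (fun y => (‖φ y‖₊:ℝ≥0∞) ^ (2:ℝ))
  calc ∫⁻ x, (‖φ (c * x)‖₊ : ℝ≥0∞) * ‖ψ x‖₊ ∂ν
      ≤ (∫⁻ x, (‖φ (c * x)‖₊:ℝ≥0∞) ^ (2:ℝ) ∂ν) ^ (1/2:ℝ) *
        (∫⁻ x, (‖ψ x‖₊:ℝ≥0∞) ^ (2:ℝ) ∂ν) ^ (1/2:ℝ) := H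
    _ = ENNReal.ofReal c⁻¹ ^ (1/2:ℝ) *
        ((∫⁻ x, (‖φ x‖₊:ℝ≥0∞) ^ (2:ℝ) ∂ν) ^ (1/2:ℝ) *
          (∫⁻ x, (‖ψ x‖₊:ℝ≥0∞) ^ (2:ℝ) ∂ν) ^ (1/2:ℝ)) := by
        rw [hscale, ENNReal.mul_rpow_of_nonneg _ _ (by norm_num), mul_assoc]

lemma sq_lt_top {φ : ℝ → ℂ} (hφ : MemLp φ 2 ν) :
    ∫⁻ x, (‖φ x‖₊:ℝ≥0∞) ^ (2:ℝ) ∂ν < ⊤ := by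
  have h := hφ.2
  rw [eLpNorm_eq_lintegral_rpow_enorm_toReal (by norm_num) (by norm_num)] at h
  simp only [ENNReal.toReal_ofNat] at h
  simp only [enorm_eq_nnnorm] at h
  by_contra hcon
  push_neg at hcon
  rw [top_le_iff.mp hcon] at h
  simp [ENNReal.top_rpow_of_pos (by norm_num : (0:ℝ) < 1/2)] at h

lemma tsum_bound (a : ℕ → ℂ) (ha : Summable fun n : ℕ => ‖a (n + 1)‖ / Real.sqrt (n + 1)) :
    ∑' n : ℕ, (‖a (n+1)‖₊ : ℝ≥0∞) * ENNReal.ofReal (((n:ℝ)+1)⁻¹) ^ (1/2:ℝ) ≠ ⊤ := by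
  have hterm : ∀ n : ℕ, (‖a (n+1)‖₊ : ℝ≥0∞) * ENNReal.ofReal (((n:ℝ)+1)⁻¹) ^ (1/2:ℝ)
      = ENNReal.ofReal (‖a (n+1)‖ / Real.sqrt ((n:ℝ)+1)) := by
    intro n
    have h1 : ENNReal.ofReal (((n:ℝ)+1)⁻¹) ^ (1/2:ℝ)
        = ENNReal.ofReal ((((n:ℝ)+1)⁻¹) ^ (1/2:ℝ)) :=
      ENNReal.ofReal_rpow_of_nonneg (by positivity) (by norm_num)
    have h2 : (((n:ℝ)+1)⁻¹) ^ (1/2:ℝ) = (Real.sqrt ((n:ℝ)+1))⁻¹ := by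
      rw [Real.inv_rpow (by positivity), ← Real.sqrt_eq_rpow]
    rw [h1, h2, ← enorm_eq_nnnorm, ← ofReal_norm, ← ENNReal.ofReal_mul (norm_nonneg _),
      div_eq_mul_inv]
  simp only [hterm]
  rw [← ENNReal.ofReal_tsum_of_nonneg (fun n => by positivity) (by exact_mod_cast ha)]
  exact ENNReal.ofReal_ne_top

lemma conj_tsum (h : ℕ → ℂ) : conj (∑' n, h n) = ∑' n, conj (h n) := by
  simp only [starRingEnd_apply]
  exact tsum_star

lemma key (a : ℕ → ℂ) (ha : Summable fun n : ℕ => ‖a (n + 1)‖ / Real.sqrt (n + 1))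
    (f g : ℝ → ℂ) (hf : MemLp f 2 ν) (hg : MemLp g 2 ν)
    (hSf : MemLp (Sfun f) 2 ν) (hSg : MemLp (Sfun g) 2 ν) :
    ∫ x, conj (Tfun (fun n => conj (a n)) f x) * Sfun g x ∂ν
      = ∫ x, conj (Sfun f x) * Tfun a g x ∂ν := by
  set F : ℕ → ℝ → ℂ := fun n x => a (n+1) * conj (f (((n:ℝ) + 1) * x)) * Sfun g x with hF
  set G : ℕ → ℝ → ℂ := fun n x => conj (Sfun f x) * (a (n+1) * g (((n:ℝ) + 1) * x)) with hG
  have hc : ∀ n : ℕ, (0:ℝ) < (n:ℝ) + 1 := fun n => by positivity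
  -- pointwise expansions
  have step1 : ∀ x, conj (Tfun (fun n => conj (a n)) f x) * Sfun g x = ∑' n, F n x := by
    intro x
    have e1 : conj (Tfun (fun n => conj (a n)) f x)
        = ∑' n : ℕ, a (n+1) * conj (f (((n:ℝ) + 1) * x)) := by
      rw [Tfun, conj_tsum]
      congr 1
      funext n
      rw [map_mul, Complex.conj_conj]
    rw [e1, ← tsum_mul_right]
  have step2 : ∀ x, conj (Sfun f x) * Tfun a g x = ∑' n, G n x := by
    intro x
    rw [Tfun, ← tsum_mul_left]
  -- measurability
  have measF : ∀ n : ℕ, AEStronglyMeasurable (F n) ν := by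
    intro n
    apply AEStronglyMeasurable.mul
    · apply AEStronglyMeasurable.const_mul
      exact RCLike.continuous_conj.comp_aestronglyMeasurable
        (hf.aestronglyMeasurable.comp_quasiMeasurePreserving (qmp_mul (hc n)))
    · exact hSg.aestronglyMeasurable
  have measG : ∀ n : ℕ, AEStronglyMeasurable (G n) ν := by
    intro n
    apply AEStronglyMeasurable.mul
    · exact RCLike.continuous_conj.comp_aestronglyMeasurable hSf.aestronglyMeasurable
    · exact AEStronglyMeasurable.const_mul
        (hg.aestronglyMeasurable.comp_quasiMeasurePreserving (qmp_mul (hc n))) _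
  -- bounds
  set t : ℕ → ℝ≥0∞ := fun n => (‖a (n+1)‖₊ : ℝ≥0∞) * ENNReal.ofReal (((n:ℝ)+1)⁻¹) ^ (1/2:ℝ)
    with ht
  set Bf : ℝ≥0∞ := (∫⁻ x, (‖f x‖₊:ℝ≥0∞) ^ (2:ℝ) ∂ν) ^ (1/2:ℝ) *
    (∫⁻ x, (‖Sfun g x‖₊:ℝ≥0∞) ^ (2:ℝ) ∂ν) ^ (1/2:ℝ) with hBf
  set Bg : ℝ≥0∞ := (∫⁻ x, (‖g x‖₊:ℝ≥0∞) ^ (2:ℝ) ∂ν) ^ (1/2:ℝ) *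
    (∫⁻ x, (‖Sfun f x‖₊:ℝ≥0∞) ^ (2:ℝ) ∂ν) ^ (1/2:ℝ) with hBg
  have boundF : ∀ n : ℕ, ∫⁻ x, ‖F n x‖₊ ∂ν ≤ t n * Bf := by
    intro n
    have hnorm : ∀ x, (‖F n x‖₊ : ℝ≥0∞)
        = (‖a (n+1)‖₊ : ℝ≥0∞) * ((‖f (((n:ℝ)+1) * x)‖₊ : ℝ≥0∞) * ‖Sfun g x‖₊) := by
      intro x
      simp [hF, nnnorm_mul, RCLike.nnnorm_conj, ENNReal.coe_mul, mul_assoc]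
    calc ∫⁻ x, ‖F n x‖₊ ∂ν
        = (‖a (n+1)‖₊ : ℝ≥0∞) *
          ∫⁻ x, (‖f (((n:ℝ)+1) * x)‖₊ : ℝ≥0∞) * ‖Sfun g x‖₊ ∂ν := by
          simp_rw [hnorm]
          exact lintegral_const_mul' _ _ ENNReal.coe_ne_top
      _ ≤ (‖a (n+1)‖₊ : ℝ≥0∞) * (ENNReal.ofReal (((n:ℝ)+1)⁻¹) ^ (1/2:ℝ) * Bf) := by
          exact mul_le_mul_right (holder_bound (hc n) f (Sfun g)
            hf.aestronglyMeasurable hSg.aestronglyMeasurable) _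
      _ = t n * Bf := by rw [ht, mul_assoc]
  have boundG : ∀ n : ℕ, ∫⁻ x, ‖G n x‖₊ ∂ν ≤ t n * Bg := by
    intro n
    have hnorm : ∀ x, (‖G n x‖₊ : ℝ≥0∞)
        = (‖a (n+1)‖₊ : ℝ≥0∞) * ((‖g (((n:ℝ)+1) * x)‖₊ : ℝ≥0∞) * ‖Sfun f x‖₊) := by
      intro x
      simp [hG, nnnorm_mul, RCLike.nnnorm_conj, ENNReal.coe_mul]
      ring
    calc ∫⁻ x, ‖G n x‖₊ ∂ν
        = (‖a (n+1)‖₊ : ℝ≥0∞) *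
          ∫⁻ x, (‖g (((n:ℝ)+1) * x)‖₊ : ℝ≥0∞) * ‖Sfun f x‖₊ ∂ν := by
          simp_rw [hnorm]
          exact lintegral_const_mul' _ _ ENNReal.coe_ne_top
      _ ≤ (‖a (n+1)‖₊ : ℝ≥0∞) * (ENNReal.ofReal (((n:ℝ)+1)⁻¹) ^ (1/2:ℝ) * Bg) := by
          exact mul_le_mul_right (holder_bound (hc n) g (Sfun f)
            hg.aestronglyMeasurable hSf.aestronglyMeasurable) _
      _ = t n * Bg := by rw [ht, mul_assoc]
  have htB : ∑' n, t n ≠ ⊤ := tsum_bound a ha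
  have hBf_ne : Bf ≠ ⊤ := by
    refine ENNReal.mul_ne_top ?_ ?_ <;>
      exact (ENNReal.rpow_lt_top_of_nonneg (by norm_num) (by
        first
        | exact (sq_lt_top hf).ne
        | exact (sq_lt_top hSg).ne)).ne
  have hBg_ne : Bg ≠ ⊤ := by
    refine ENNReal.mul_ne_top ?_ ?_ <;>
      exact (ENNReal.rpow_lt_top_of_nonneg (by norm_num) (by
        first
        | exact (sq_lt_top hg).ne
        | exact (sq_lt_top hSf).ne)).ne
  have sumF : ∑' n, ∫⁻ x, ‖F n x‖₊ ∂ν ≠ ⊤ := by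
    refine ne_top_of_le_ne_top ?_ (ENNReal.tsum_le_tsum boundF)
    rw [ENNReal.tsum_mul_right]
    exact ENNReal.mul_ne_top htB hBf_ne
  have sumG : ∑' n, ∫⁻ x, ‖G n x‖₊ ∂ν ≠ ⊤ := by
    refine ne_top_of_le_ne_top ?_ (ENNReal.tsum_le_tsum boundG)
    rw [ENNReal.tsum_mul_right]
    exact ENNReal.mul_ne_top htB hBg_ne
  -- termwise equality
  have term_eq : ∀ n : ℕ, ∫ x, F n x ∂ν = ∫ x, G n x ∂ν := by
    intro n
    exact key_sub (hc n) (a (n+1)) f g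
  calc ∫ x, conj (Tfun (fun n => conj (a n)) f x) * Sfun g x ∂ν
      = ∫ x, ∑' n, F n x ∂ν := by
        exact integral_congr_ae (Filter.Eventually.of_forall step1)
    _ = ∑' n, ∫ x, F n x ∂ν := integral_tsum measF sumF
    _ = ∑' n, ∫ x, G n x ∂ν := by
        congr 1
        funext n
        exact term_eq n
    _ = ∫ x, ∑' n, G n x ∂ν := (integral_tsum measG sumG).symm
    _ = ∫ x, conj (Sfun f x) * Tfun a g x ∂ν := by
        exact integral_congr_ae (Filter.Eventually.of_forall fun x => (step2 x).symm)

lemma Sfun_Sfun_ae (h : ℝ → ℂ) : Sfun (Sfun h) =ᵐ[ν] h := by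
  have h1 : ∀ᵐ x ∂ν, x ∈ Ioi (0:ℝ) := ae_restrict_mem measurableSet_Ioi
  filter_upwards [h1] with x hx
  have hx0 : x ≠ 0 := ne_of_gt hx
  have hxC : (x:ℂ) ≠ 0 := Complex.ofReal_ne_zero.mpr hx0
  simp only [Sfun, Complex.ofReal_inv, inv_inv]
  rw [← mul_assoc, inv_mul_cancel₀ hxC, one_mul]

end Stmt10Aux

open Stmt10Aux in
theorem stmt10 (a : ℕ → ℂ)
    (ha : Summable fun n : ℕ => ‖a (n + 1)‖ / Real.sqrt (n + 1))
    (C : ℝ) (hC : 0 < C)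
    (hiso : ∀ m₀ n₀ : ℕ, 0 < m₀ → 0 < n₀ → Nat.Coprime m₀ n₀ →
      (∑' k : ℕ, a (m₀ * (k + 1)) * conj (a (n₀ * (k + 1))) / ((k : ℂ) + 1)) =
        if m₀ = 1 ∧ n₀ = 1 then (C : ℂ) ^ 2 else 0)
    (S : Lp ℂ 2 ν ≃ₗᵢ[ℂ] Lp ℂ 2 ν)
    (hS : ∀ (f : ℝ → ℂ) (hf : MemLp f 2 ν),
      ∃ h2 : MemLp (Sfun f) 2 ν, S (hf.toLp f) = h2.toLp (Sfun f))
    (T Tc : Lp ℂ 2 ν →L[ℂ] Lp ℂ 2 ν)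
    (hT : ∀ (f : ℝ → ℂ) (hf : MemLp f 2 ν),
      ∃ h2 : MemLp (Tfun a f) 2 ν, T (hf.toLp f) = h2.toLp (Tfun a f))
    (hTc : ∀ (f : ℝ → ℂ) (hf : MemLp f 2 ν),
      ∃ h2 : MemLp (Tfun (fun n => conj (a n)) f) 2 ν,
        Tc (hf.toLp f) = h2.toLp (Tfun (fun n => conj (a n)) f)) :
    ∀ u : Lp ℂ 2 ν, S (Tc (S u)) = ContinuousLinearMap.adjoint T u := by
  have SS : ∀ x : Lp ℂ 2 ν, S (S x) = x := by
    intro x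
    obtain ⟨h1, e1⟩ := hS x (Lp.memLp x)
    rw [Lp.toLp_coeFn x (Lp.memLp x)] at e1
    obtain ⟨h2, e2⟩ := hS (Sfun x) h1
    rw [e1, e2]
    calc h2.toLp (Sfun (Sfun ↑x)) = (Lp.memLp x).toLp ↑x :=
          (MemLp.toLp_eq_toLp_iff _ _).mpr (Sfun_Sfun_ae _)
      _ = x := Lp.toLp_coeFn x _
  intro u
  refine ext_inner_right (𝕜 := ℂ) fun v => ?_
  rw [ContinuousLinearMap.adjoint_inner_left]
  conv_lhs => rw [← SS v]
  rw [S.inner_map_map]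
  obtain ⟨hSu2, eSu⟩ := hS ↑u (Lp.memLp u)
  rw [Lp.toLp_coeFn u (Lp.memLp u)] at eSu
  obtain ⟨hTcSu2, eTcSu⟩ := hTc (Sfun ↑u) hSu2
  obtain ⟨hSv2, eSv⟩ := hS ↑v (Lp.memLp v)
  rw [Lp.toLp_coeFn v (Lp.memLp v)] at eSv
  obtain ⟨hTv2, eTv⟩ := hT ↑v (Lp.memLp v)
  rw [Lp.toLp_coeFn v (Lp.memLp v)] at eTv
  obtain ⟨hSSu2, -⟩ := hS (Sfun ↑u) hSu2
  have c1 : (Tc (S u) : ℝ → ℂ) =ᵐ[ν] Tfun (fun n => conj (a n)) (Sfun ↑u) := by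
    rw [eSu, eTcSu]; exact MemLp.coeFn_toLp _
  have c2 : ((S v : Lp ℂ 2 ν) : ℝ → ℂ) =ᵐ[ν] Sfun ↑v := by
    rw [eSv]; exact MemLp.coeFn_toLp _
  have c3 : ((T v : Lp ℂ 2 ν) : ℝ → ℂ) =ᵐ[ν] Tfun a ↑v := by
    rw [eTv]; exact MemLp.coeFn_toLp _
  rw [MeasureTheory.L2.inner_def, MeasureTheory.L2.inner_def]
  simp only [RCLike.inner_apply']
  have L : ∫ x, conj ((Tc (S u) : ℝ → ℂ) x) * ((S v : ℝ → ℂ) x) ∂ν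
      = ∫ x, conj (Tfun (fun n => conj (a n)) (Sfun ↑u) x) * Sfun (↑v) x ∂ν :=
    integral_congr_ae (by filter_upwards [c1, c2] with x h1 h2; rw [h1, h2])
  have K := key a ha (Sfun ↑u) ↑v hSu2 (Lp.memLp v) hSSu2 hSv2
  have M : ∫ x, conj (Sfun (Sfun ↑u) x) * Tfun a (↑v) x ∂ν
      = ∫ x, conj ((u : ℝ → ℂ) x) * ((T v : ℝ → ℂ) x) ∂ν :=
    integral_congr_ae (by
      filter_upwards [Sfun_Sfun_ae ((u : ℝ → ℂ)), c3] with x h1 h2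
      rw [h1, h2])
  rw [L, K, M]
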